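/- Let μ be a finite Borel measure with compact infinite support in ℂ and let M be the Hessenberg matrix of multiplication by z in the orthonormal polynomial basis of the closure of polynomials in L²(μ). Let P be a monic polynomial of degree q ≥ 1 and r > 0. If lim_{n→∞} κ_n/κ_{n+q} = r and lim_{n→∞} ∫ |P(z)|² |φ_n(z;μ)|² dμ(z) = r², then lim_{n→∞} ‖(P(M) − rR^q) R^n e_j‖ = 0 for every basis vector e_j, i.e., (P(M) − rR^q)R^n → 0 strongly. -/

import Mathlib

open MeasureTheory Polynomial Filter

noncomputable section

set_option linter.unusedSectionVars false
set_option maxHeartbeats 1000000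

/-- The support of a measure: points all of whose neighborhoods have positive measure. -/
def msupport (mu : Measure ℂ) : Set ℂ := {x | ∀ U ∈ nhds x, mu U ≠ 0}

/-- `φ` is the sequence of orthonormal polynomials for `μ`, with positive leading
coefficients `κ`. -/
def IsOrthonormalPolys (mu : Measure ℂ) (φ : ℕ → Polynomial ℂ) (κ : ℕ → ℝ) : Prop :=
  (∀ n, (φ n).degree = n) ∧ (∀ n, 0 < κ n) ∧ (∀ n, (φ n).leadingCoeff = (κ n : ℂ)) ∧
  ∀ m n, (∫ z, (φ m).eval z * (starRingEnd ℂ) ((φ n).eval z) ∂mu) = if m = n then 1 else 0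

lemma msupport_compl_null (mu : Measure ℂ) : mu (msupport mu)ᶜ = 0 := by
  apply measure_null_of_locally_null
  intro x hx
  simp only [msupport, Set.mem_compl_iff, Set.mem_setOf_eq, not_forall] at hx
  obtain ⟨U, hU, hU0⟩ := hx
  push_neg at hU0
  exact ⟨U, mem_nhdsWithin_of_mem_nhds hU, hU0⟩

lemma integrable_cont (mu : Measure ℂ) [IsFiniteMeasure mu]
    (hcs : IsCompact (msupport mu)) {E : Type*} [NormedAddCommGroup E]
    {f : ℂ → E} (hf : Continuous f) : Integrable f mu := by
  have h1 : IntegrableOn f (msupport mu) mu :=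
    hf.continuousOn.integrableOn_compact hcs
  have h2 : mu.restrict (msupport mu) = mu := by
    apply Measure.restrict_eq_self_of_ae_mem
    rw [ae_iff]
    exact msupport_compl_null mu
  rwa [IntegrableOn, h2] at h1

def ipol (mu : Measure ℂ) (p s : Polynomial ℂ) : ℂ :=
  ∫ z, p.eval z * (starRingEnd ℂ) (s.eval z) ∂mu

variable (mu : Measure ℂ) [IsFiniteMeasure mu]
set_option linter.unusedSectionVars false

lemma cont_ps (p s : Polynomial ℂ) :
    Continuous (fun z => p.eval z * (starRingEnd ℂ) (s.eval z)) :=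
  (p.continuous).mul (continuous_star.comp s.continuous)

lemma int_ps (hcs : IsCompact (msupport mu)) (p s : Polynomial ℂ) :
    Integrable (fun z => p.eval z * (starRingEnd ℂ) (s.eval z)) mu :=
  integrable_cont mu hcs (cont_ps p s)

lemma ipol_sum (hcs : IsCompact (msupport mu)) (s : Finset ℕ) (c : ℕ → ℂ) (pj : ℕ → Polynomial ℂ) (g : Polynomial ℂ) :
    ipol mu (∑ j ∈ s, c j • pj j) g = ∑ j ∈ s, c j * ipol mu (pj j) g := by
  have h : ∀ z, (∑ j ∈ s, c j • pj j).eval z * (starRingEnd ℂ) (g.eval z)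
      = ∑ j ∈ s, c j * ((pj j).eval z * (starRingEnd ℂ) (g.eval z)) := by
    intro z
    rw [Polynomial.eval_finset_sum, Finset.sum_mul]
    refine Finset.sum_congr rfl fun j _ => ?_
    simp [Polynomial.eval_smul, smul_eq_mul, mul_assoc]
  simp only [ipol, h]
  rw [integral_finset_sum _ (fun j _ => ((int_ps mu hcs (pj j) g).const_mul _))]
  simp only [integral_const_mul]

lemma ipol_conj (p g : Polynomial ℂ) : ipol mu p g = (starRingEnd ℂ) (ipol mu g p) := by
  rw [ipol, ipol, ← integral_conj]
  congr 1; funext z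
  simp [mul_comm]

lemma ipol_sub (hcs : IsCompact (msupport mu)) (p g s : Polynomial ℂ) :
    ipol mu (p - g) s = ipol mu p s - ipol mu g s := by
  simp only [ipol]
  rw [← integral_sub (int_ps mu hcs p s) (int_ps mu hcs g s)]
  congr 1; funext z; simp [sub_mul]

lemma ipol_smul (a : ℂ) (p s : Polynomial ℂ) :
    ipol mu (a • p) s = a * ipol mu p s := by
  simp only [ipol]
  rw [← integral_const_mul]
  congr 1; funext z; simp [mul_assoc]

lemma span_phi (φ : ℕ → Polynomial ℂ) (κ : ℕ → ℝ)
    (hdeg : ∀ n, (φ n).degree = n) (hκpos : ∀ n, 0 < κ n)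
    (hlead : ∀ n, (φ n).leadingCoeff = (κ n : ℂ)) :
    ∀ (n : ℕ) (p : Polynomial ℂ), p.natDegree ≤ n →
      ∃ c : ℕ → ℂ, p = ∑ j ∈ Finset.range (n + 1), c j • φ j := by
  have hκne : ∀ n, ((κ n : ℂ)) ≠ 0 := fun n => by
    exact_mod_cast Complex.ofReal_ne_zero.mpr (hκpos n).ne'
  have hnd : ∀ n, (φ n).natDegree = n := fun n => natDegree_eq_of_degree_eq_some (hdeg n)
  have hcoeff : ∀ n, (φ n).coeff n = (κ n : ℂ) := fun n => by
    have := hlead n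
    rwa [Polynomial.leadingCoeff, hnd n] at this
  intro n
  induction n with
  | zero =>
    intro p hp
    refine ⟨fun _ => p.coeff 0 / (κ 0 : ℂ), ?_⟩
    have h0 : φ 0 = Polynomial.C ((κ 0 : ℂ)) := by
      have := Polynomial.eq_C_of_degree_le_zero (le_of_eq (hdeg 0))
      rw [this, hcoeff 0]
    rw [Finset.sum_range_one, h0, Polynomial.smul_C, smul_eq_mul,
      div_mul_cancel₀ _ (hκne 0)]
    exact (Polynomial.eq_C_of_natDegree_le_zero hp)
  | succ n ih =>
    intro p hp
    set a := p.coeff (n + 1) / (κ (n + 1) : ℂ) with ha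
    have hg : (p - a • φ (n + 1)).natDegree ≤ n := by
      rw [Polynomial.natDegree_le_iff_coeff_eq_zero]
      intro m hm
      rw [Polynomial.coeff_sub, Polynomial.coeff_smul, smul_eq_mul]
      rcases eq_or_lt_of_le (Nat.succ_le_of_lt hm) with h | h
      · rw [← h, hcoeff, ha, div_mul_cancel₀ _ (hκne (n + 1)), sub_self]
      · rw [Polynomial.coeff_eq_zero_of_natDegree_lt (lt_of_le_of_lt hp h),
          Polynomial.coeff_eq_zero_of_natDegree_lt (by rw [hnd]; exact h),
          mul_zero, sub_self]
    obtain ⟨c, hc⟩ := ih _ hg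
    refine ⟨fun j => if j = n + 1 then a else c j, ?_⟩
    rw [Finset.sum_range_succ]
    simp only [if_pos rfl]
    have heq : ∑ j ∈ Finset.range (n + 1), (if j = n + 1 then a else c j) • φ j
        = ∑ j ∈ Finset.range (n + 1), c j • φ j := by
      refine Finset.sum_congr rfl fun j hj => ?_
      rw [if_neg (by simp at hj; omega)]
    rw [heq, ← hc]
    exact (sub_add_cancel _ _).symm

section
variable (hcs : IsCompact (msupport mu)) (φ : ℕ → Polynomial ℂ) (κ : ℕ → ℝ)
  (hdeg : ∀ n, (φ n).degree = n) (hκpos : ∀ n, 0 < κ n)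
  (hlead : ∀ n, (φ n).leadingCoeff = (κ n : ℂ))
  (hortho : ∀ m n, ipol mu (φ m) (φ n) = if m = n then 1 else 0)
include hcs hdeg hκpos hlead hortho

-- coefficient of p against φ j
-- use ipol mu p (φ j) directly

lemma ipol_rep_coeff {N : ℕ} {p : Polynomial ℂ} {c : ℕ → ℂ}
    (hc : p = ∑ j ∈ Finset.range (N + 1), c j • φ j) (k : ℕ) :
    ipol mu p (φ k) = if k < N + 1 then c k else 0 := by
  rw [hc, ipol_sum mu hcs]
  simp only [hortho]
  simp only [mul_ite, mul_one, mul_zero]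
  rw [Finset.sum_ite_eq' (Finset.range (N+1)) k c]
  simp [Finset.mem_range]

lemma cf_rep (N : ℕ) (p : Polynomial ℂ) (hp : p.natDegree ≤ N) :
    p = ∑ j ∈ Finset.range (N + 1), ipol mu p (φ j) • φ j := by
  obtain ⟨c, hc⟩ := span_phi φ κ hdeg hκpos hlead N p hp
  rw [hc]
  refine Finset.sum_congr rfl fun j hj => ?_
  rw [← hc, ipol_rep_coeff mu hcs φ κ hdeg hκpos hlead hortho hc _, if_pos (Finset.mem_range.mp hj)]

lemma cf_zero_of_high (k : ℕ) (p : Polynomial ℂ)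
    (h : ∀ m, k ≤ m → p.coeff m = 0) : ipol mu p (φ k) = 0 := by
  cases k with
  | zero =>
    have : p = 0 := Polynomial.ext fun m => by simpa using h m (Nat.zero_le m)
    simp [this, ipol]
  | succ K =>
    have hp : p.natDegree ≤ K :=
      Polynomial.natDegree_le_iff_coeff_eq_zero.mpr fun m hm => h m hm
    obtain ⟨c, hc⟩ := span_phi φ κ hdeg hκpos hlead K p hp
    rw [ipol_rep_coeff mu hcs φ κ hdeg hκpos hlead hortho hc _, if_neg (by omega)]

lemma cf_zero_of_deg_lt (k : ℕ) (p : Polynomial ℂ) (h : p.natDegree < k) :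
    ipol mu p (φ k) = 0 :=
  cf_zero_of_high mu hcs φ κ hdeg hκpos hlead hortho k p
    (fun m hm => Polynomial.coeff_eq_zero_of_natDegree_lt (lt_of_lt_of_le h hm))

lemma parseval (N : ℕ) (p : Polynomial ℂ) (hp : p.natDegree ≤ N) :
    ∑ j ∈ Finset.range (N + 1), ‖ipol mu p (φ j)‖ ^ 2
      = ∫ z, ‖p.eval z‖ ^ 2 ∂mu := by
  have h1 : ipol mu p p = ∑ j ∈ Finset.range (N + 1), (‖ipol mu p (φ j)‖ ^ 2 : ℂ) := by
    nth_rw 1 [cf_rep mu hcs φ κ hdeg hκpos hlead hortho N p hp]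
    rw [ipol_sum mu hcs]
    refine Finset.sum_congr rfl fun j _ => ?_
    rw [ipol_conj mu (φ j) p, Complex.mul_conj]
    simp [Complex.normSq_eq_norm_sq]
  have h2 : ipol mu p p = ((∫ z, ‖p.eval z‖ ^ 2 ∂mu : ℝ) : ℂ) := by
    have : ipol mu p p = ∫ z, ((‖p.eval z‖ ^ 2 : ℝ) : ℂ) ∂mu := by
      rw [ipol]; congr 1; funext z
      rw [Complex.mul_conj]
      simp [Complex.normSq_eq_norm_sq]
    rw [this]
    exact integral_ofReal
  have := h1.symm.trans h2
  exact_mod_cast this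
end

abbrev Hsp := lp (fun _ : ℕ => ℂ) 2

def vecp (mu : Measure ℂ) (φ : ℕ → Polynomial ℂ) (p : Polynomial ℂ) : Hsp :=
  ∑ j ∈ Finset.range (p.natDegree + 1), lp.single 2 j (ipol mu p (φ j))

section
variable (mu : Measure ℂ) [IsFiniteMeasure mu]
  (hcs : IsCompact (msupport mu)) (φ : ℕ → Polynomial ℂ) (κ : ℕ → ℝ)
  (hdeg : ∀ n, (φ n).degree = n) (hκpos : ∀ n, 0 < κ n)
  (hlead : ∀ n, (φ n).leadingCoeff = (κ n : ℂ))
  (hortho : ∀ m n, ipol mu (φ m) (φ n) = if m = n then 1 else 0)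
include hcs hdeg hκpos hlead hortho

lemma sum_single_coords (N : ℕ) (f : ℕ → ℂ) (k : ℕ) :
    (((∑ j ∈ Finset.range (N + 1), lp.single 2 j (f j)) : Hsp) : ∀ _ : ℕ, ℂ) k
      = if k < N + 1 then f k else 0 := by
  simp only [lp.coeFn_sum, Finset.sum_apply, lp.single_apply, Pi.single_apply, Finset.sum_ite_eq,
    Finset.mem_range]

lemma vecp_coords (p : Polynomial ℂ) (k : ℕ) :
    (vecp mu φ p : ∀ _ : ℕ, ℂ) k = ipol mu p (φ k) := by
  rw [vecp, sum_single_coords mu hcs φ κ hdeg hκpos hlead hortho]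
  split_ifs with h
  · rfl
  · exact (cf_zero_of_deg_lt mu hcs φ κ hdeg hκpos hlead hortho k p (by omega)).symm

lemma vecp_ext {x : Hsp} {p : Polynomial ℂ}
    (h : ∀ k, (x : ∀ _ : ℕ, ℂ) k = ipol mu p (φ k)) : x = vecp mu φ p := by
  refine lp.ext (funext fun k => ?_)
  rw [h k, vecp_coords mu hcs φ κ hdeg hκpos hlead hortho]

lemma vecp_sum (s : Finset ℕ) (a : ℕ → ℂ) (g : ℕ → Polynomial ℂ) :
    vecp mu φ (∑ i ∈ s, a i • g i) = ∑ i ∈ s, a i • vecp mu φ (g i) := by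
  refine (vecp_ext mu hcs φ κ hdeg hκpos hlead hortho fun k => ?_).symm
  rw [ipol_sum mu hcs]
  simp only [lp.coeFn_sum, Finset.sum_apply, lp.coeFn_smul, Pi.smul_apply, smul_eq_mul]
  exact Finset.sum_congr rfl fun i _ => by
    rw [vecp_coords mu hcs φ κ hdeg hκpos hlead hortho]

lemma M_vecp (M : Hsp →L[ℂ] Hsp)
    (hM : ∀ k j : ℕ, ((M (lp.single 2 k 1)) : ∀ _ : ℕ, ℂ) j =
      ∫ z, z * (φ k).eval z * (starRingEnd ℂ) ((φ j).eval z) ∂mu)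
    (p : Polynomial ℂ) : M (vecp mu φ p) = vecp mu φ (Polynomial.X * p) := by
  have hM' : ∀ k j : ℕ, ((M (lp.single 2 k 1)) : ∀ _ : ℕ, ℂ) j
      = ipol mu (Polynomial.X * φ k) (φ j) := by
    intro k j
    rw [hM k j, ipol]
    congr 1; funext z; simp
  refine vecp_ext mu hcs φ κ hdeg hκpos hlead hortho fun k => ?_
  set N := p.natDegree with hN
  have hrep : vecp mu φ p
      = ∑ j ∈ Finset.range (N + 1), ipol mu p (φ j) • lp.single 2 j (1 : ℂ) := by
    rw [vecp]
    refine Finset.sum_congr rfl fun j _ => ?_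
    rw [← lp.single_smul]
    norm_num
  have hXp : Polynomial.X * p
      = ∑ j ∈ Finset.range (N + 1), ipol mu p (φ j) • (Polynomial.X * φ j) := by
    have hrep2 : p = ∑ j ∈ Finset.range (N + 1), ipol mu p (φ j) • φ j :=
      cf_rep mu hcs φ κ hdeg hκpos hlead hortho N p le_rfl
    nth_rw 1 [hrep2]
    rw [Finset.mul_sum]
    exact Finset.sum_congr rfl fun j _ => (mul_smul_comm _ _ _)
  rw [hrep, map_sum]
  simp only [_root_.map_smul]
  simp only [lp.coeFn_sum, Finset.sum_apply, lp.coeFn_smul, Pi.smul_apply, smul_eq_mul]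
  rw [show (Polynomial.X * p) = ∑ j ∈ Finset.range (N + 1),
      ipol mu p (φ j) • (Polynomial.X * φ j) from hXp,
    ipol_sum mu hcs]
  refine Finset.sum_congr rfl fun j _ => ?_
  rw [hM']

lemma Mpow_vecp (M : Hsp →L[ℂ] Hsp)
    (hM : ∀ k j : ℕ, ((M (lp.single 2 k 1)) : ∀ _ : ℕ, ℂ) j =
      ∫ z, z * (φ k).eval z * (starRingEnd ℂ) ((φ j).eval z) ∂mu)
    (n : ℕ) (p : Polynomial ℂ) :
    (M ^ n) (vecp mu φ p) = vecp mu φ (Polynomial.X ^ n * p) := by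
  induction n generalizing p with
  | zero => simp
  | succ n ih =>
    rw [pow_succ', ContinuousLinearMap.mul_apply, ih p,
      M_vecp mu hcs φ κ hdeg hκpos hlead hortho M hM]
    congr 1
    ring

lemma aeval_vecp (M : Hsp →L[ℂ] Hsp)
    (hM : ∀ k j : ℕ, ((M (lp.single 2 k 1)) : ∀ _ : ℕ, ℂ) j =
      ∫ z, z * (φ k).eval z * (starRingEnd ℂ) ((φ j).eval z) ∂mu)
    (P : Polynomial ℂ) (p : Polynomial ℂ) :
    (Polynomial.aeval M P) (vecp mu φ p) = vecp mu φ (P * p) := by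
  rw [Polynomial.aeval_eq_sum_range]
  have hPp : P * p = ∑ i ∈ Finset.range (P.natDegree + 1),
      P.coeff i • (Polynomial.X ^ i * p) := by
    nth_rw 1 [Polynomial.as_sum_range' P (P.natDegree + 1) (Nat.lt_succ_self _)]
    rw [Finset.sum_mul]
    refine Finset.sum_congr rfl fun i _ => ?_
    rw [← Polynomial.C_mul_X_pow_eq_monomial, Polynomial.smul_eq_C_mul, mul_assoc]
  rw [hPp, vecp_sum mu hcs φ κ hdeg hκpos hlead hortho]
  rw [ContinuousLinearMap.sum_apply]
  refine Finset.sum_congr rfl fun i _ => ?_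
  rw [ContinuousLinearMap.smul_apply,
    Mpow_vecp mu hcs φ κ hdeg hκpos hlead hortho M hM]
end

lemma R_single (R : Hsp →L[ℂ] Hsp)
    (hR : ∀ (x : Hsp) (n : ℕ), (R x : ∀ _ : ℕ, ℂ) n = if n = 0 then 0 else x (n - 1))
    (j : ℕ) : R (lp.single 2 j (1 : ℂ)) = lp.single 2 (j + 1) (1 : ℂ) := by
  refine lp.ext (funext fun n => ?_)
  rw [hR]
  rcases Nat.eq_zero_or_pos n with h0 | h0
  · subst h0
    simp [lp.single_apply]
  · rw [if_neg h0.ne']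
    by_cases h : n = j + 1
    · subst h
      rw [show j + 1 - 1 = j from rfl, lp.single_apply_self, lp.single_apply_self]
    · rw [lp.single_apply_ne _ _ _ (show n - 1 ≠ j by omega),
        lp.single_apply_ne _ _ _ h]

lemma Rpow_single (R : Hsp →L[ℂ] Hsp)
    (hR : ∀ (x : Hsp) (n : ℕ), (R x : ∀ _ : ℕ, ℂ) n = if n = 0 then 0 else x (n - 1))
    (n j : ℕ) : (R ^ n) (lp.single 2 j (1 : ℂ)) = lp.single 2 (j + n) (1 : ℂ) := by
  induction n with
  | zero => simp
  | succ n ih =>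
    rw [pow_succ', ContinuousLinearMap.mul_apply, ih, R_single R hR, Nat.add_assoc]

theorem stmt9 (mu : Measure ℂ) [IsFiniteMeasure mu]
    (hcs : IsCompact (msupport mu)) (hinf : (msupport mu).Infinite)
    (φ : ℕ → Polynomial ℂ) (κ : ℕ → ℝ) (hON : IsOrthonormalPolys mu φ κ)
    (M R : lp (fun _ : ℕ => ℂ) 2 →L[ℂ] lp (fun _ : ℕ => ℂ) 2)
    (hM : ∀ k j : ℕ, (M (lp.single 2 k 1)) j =
      ∫ z, z * (φ k).eval z * (starRingEnd ℂ) ((φ j).eval z) ∂mu)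
    (hR : ∀ (x : lp (fun _ : ℕ => ℂ) 2) (n : ℕ),
      (R x) n = if n = 0 then 0 else x (n - 1))
    (P : Polynomial ℂ) (hP : P.Monic) (q : ℕ) (hq : P.natDegree = q) (hq1 : 1 ≤ q)
    (r : ℝ) (hr : 0 < r)
    (hκ : Tendsto (fun n => κ n / κ (n + q)) atTop (nhds r))
    (hPφ : Tendsto (fun n => ∫ z, ‖P.eval z‖ ^ 2 * ‖(φ n).eval z‖ ^ 2 ∂mu)
      atTop (nhds (r ^ 2))) :
    ∀ j : ℕ, Tendsto
      (fun n : ℕ => ‖(Polynomial.aeval M P - (r : ℂ) • R ^ q) ((R ^ n) (lp.single 2 j 1))‖)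
      atTop (nhds 0) := by
  obtain ⟨hdeg, hκpos, hlead, hortho'⟩ := hON
  have hortho : ∀ m n, ipol mu (φ m) (φ n) = if m = n then 1 else 0 := hortho'
  have hnd : ∀ n, (φ n).natDegree = n := fun n => natDegree_eq_of_degree_eq_some (hdeg n)
  have hφne : ∀ n, φ n ≠ 0 := by
    intro n h
    have hd := hdeg n
    rw [h, Polynomial.degree_zero] at hd
    exact (by simp at hd)
  have hκne : ∀ n, ((κ n : ℂ)) ≠ 0 := fun n => by
    exact_mod_cast Complex.ofReal_ne_zero.mpr (hκpos n).ne'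
  -- degree of P * φ m
  have hdegPm : ∀ m : ℕ, (P * φ m).natDegree = m + q := fun m => by
    rw [Polynomial.natDegree_mul hP.ne_zero (hφne m), hq, hnd, Nat.add_comm]
  -- single as vecp
  have hsingle_vecp : ∀ m : ℕ, lp.single 2 m (1 : ℂ) = vecp mu φ (φ m) := by
    intro m
    refine vecp_ext mu hcs φ κ hdeg hκpos hlead hortho fun k => ?_
    rw [hortho m k, lp.single_apply]
    by_cases h : k = m
    · subst h; simp
    · rw [Pi.single_apply, if_neg h, if_neg (fun hh => h hh.symm)]
  -- top coefficient
  have hcf_top : ∀ m : ℕ, ipol mu (P * φ m) (φ (m + q))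
      = ((κ m / κ (m + q) : ℝ) : ℂ) := by
    intro m
    set t : ℂ := ((κ m / κ (m + q) : ℝ) : ℂ) with ht
    have hg : ipol mu (P * φ m - t • φ (m + q)) (φ (m + q)) = 0 := by
      refine cf_zero_of_high mu hcs φ κ hdeg hκpos hlead hortho (m + q) _ fun k hk => ?_
      rw [Polynomial.coeff_sub, Polynomial.coeff_smul, smul_eq_mul]
      rcases eq_or_lt_of_le hk with h | h
      · have h1 : (P * φ m).coeff (m + q) = (κ m : ℂ) := by
          have : (P * φ m).coeff (m + q) = (P * φ m).leadingCoeff := by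
            rw [Polynomial.leadingCoeff, hdegPm m]
          rw [this, Polynomial.leadingCoeff_mul, hP.leadingCoeff, one_mul, hlead]
        have h2 : (φ (m + q)).coeff (m + q) = (κ (m + q) : ℂ) := by
          have := hlead (m + q)
          rwa [Polynomial.leadingCoeff, hnd] at this
        rw [← h, h1, h2, ht]
        push_cast
        rw [div_mul_cancel₀ _ (hκne (m + q)), sub_self]
      · rw [Polynomial.coeff_eq_zero_of_natDegree_lt (by rw [hdegPm m]; exact h),
          Polynomial.coeff_eq_zero_of_natDegree_lt (by rw [hnd]; exact h),
          mul_zero, sub_self]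
    rw [ipol_sub mu hcs, ipol_smul mu, hortho, if_pos rfl, mul_one] at hg
    linear_combination hg
  -- the norm identity
  have hnorm : ∀ m : ℕ,
      ‖(Polynomial.aeval M P - (r : ℂ) • R ^ q) (lp.single 2 m (1 : ℂ))‖ ^ 2
        = (∫ z, ‖P.eval z‖ ^ 2 * ‖(φ m).eval z‖ ^ 2 ∂mu) + r ^ 2
          - 2 * r * (κ m / κ (m + q)) := by
    intro m
    set N := m + q with hN
    set t : ℝ := κ m / κ (m + q) with ht
    set d : ℕ → ℂ := fun k => ipol mu (P * φ m) (φ k) - if k = N then (r : ℂ) else 0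
      with hd
    have happ : (Polynomial.aeval M P - (r : ℂ) • R ^ q) (lp.single 2 m (1 : ℂ))
        = ∑ k ∈ Finset.range (N + 1), lp.single 2 k (d k) := by
      rw [ContinuousLinearMap.sub_apply, ContinuousLinearMap.smul_apply]
      rw [hsingle_vecp m, aeval_vecp mu hcs φ κ hdeg hκpos hlead hortho M hM,
        ← hsingle_vecp m, Rpow_single R hR]
      refine lp.ext (funext fun k => ?_)
      rw [lp.coeFn_sub, Pi.sub_apply, lp.coeFn_smul, Pi.smul_apply,
        sum_single_coords mu hcs φ κ hdeg hκpos hlead hortho, smul_eq_mul,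
        vecp_coords mu hcs φ κ hdeg hκpos hlead hortho]
      by_cases hk : k < N + 1
      · rw [if_pos hk, hd]
        simp only []
        congr 1
        rw [lp.single_apply]
        by_cases h : k = N
        · rw [Pi.single_apply, if_pos h, if_pos h]; simp
        · rw [Pi.single_apply, if_neg h, if_neg h]; simp
      · rw [if_neg hk,
          cf_zero_of_deg_lt mu hcs φ κ hdeg hκpos hlead hortho k _ (by rw [hdegPm]; omega),
          lp.single_apply, Pi.single_apply, if_neg (show ¬ k = N by omega)]
        simp
    rw [happ]
    have hp2 : (0 : ℝ) < (2 : ENNReal).toReal := by norm_num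
    have hns := lp.norm_sum_single hp2 d (Finset.range (N + 1))
    rw [show ((2 : ENNReal).toReal) = ((2 : ℕ) : ℝ) by norm_num] at hns
    simp only [Real.rpow_natCast] at hns
    rw [hns]
    -- split the sum
    have hNmem : N ∈ Finset.range (N + 1) := Finset.self_mem_range_succ N
    rw [← Finset.sum_erase_add _ _ hNmem]
    have herase : ∑ k ∈ (Finset.range (N + 1)).erase N, ‖d k‖ ^ 2
        = ∑ k ∈ (Finset.range (N + 1)).erase N, ‖ipol mu (P * φ m) (φ k)‖ ^ 2 := by
      refine Finset.sum_congr rfl fun k hk => ?_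
      rw [hd]; simp only []
      rw [if_neg (Finset.ne_of_mem_erase hk), sub_zero]
    have hsum : ∑ k ∈ (Finset.range (N + 1)).erase N, ‖ipol mu (P * φ m) (φ k)‖ ^ 2
        = (∫ z, ‖P.eval z‖ ^ 2 * ‖(φ m).eval z‖ ^ 2 ∂mu)
          - ‖ipol mu (P * φ m) (φ N)‖ ^ 2 := by
      have hsplit : ∑ k ∈ (Finset.range (N + 1)).erase N, ‖ipol mu (P * φ m) (φ k)‖ ^ 2
          + ‖ipol mu (P * φ m) (φ N)‖ ^ 2
          = ∑ k ∈ Finset.range (N + 1), ‖ipol mu (P * φ m) (φ k)‖ ^ 2 :=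
        Finset.sum_erase_add (Finset.range (N + 1)) _ hNmem
      have hpars := parseval mu hcs φ κ hdeg hκpos hlead hortho N (P * φ m)
        (le_of_eq (hdegPm m))
      have hint : (∫ z, ‖(P * φ m).eval z‖ ^ 2 ∂mu)
          = ∫ z, ‖P.eval z‖ ^ 2 * ‖(φ m).eval z‖ ^ 2 ∂mu := by
        congr 1; funext z
        rw [Polynomial.eval_mul, norm_mul, mul_pow]
      rw [hpars, hint] at hsplit
      linarith
    have hdN : d N = ((t - r : ℝ) : ℂ) := by
      rw [hd]; simp only [if_pos rfl]
      rw [hcf_top m, ← hN, ← ht]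
      push_cast; ring
    have htN : ‖ipol mu (P * φ m) (φ N)‖ ^ 2 = t ^ 2 := by
      rw [hN, hcf_top m, ← ht, Complex.norm_real, Real.norm_eq_abs, sq_abs]
    rw [herase, hsum, htN, hdN, Complex.norm_real, Real.norm_eq_abs, sq_abs]
    ring
  -- conclusion
  intro j
  have hshift : Tendsto (fun n : ℕ => n + j) atTop atTop := tendsto_add_atTop_nat j
  have hS : Tendsto (fun n : ℕ => ∫ z, ‖P.eval z‖ ^ 2 * ‖(φ (n + j)).eval z‖ ^ 2 ∂mu)
      atTop (nhds (r ^ 2)) := hPφ.comp hshift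
  have hT : Tendsto (fun n : ℕ => κ (n + j) / κ (n + j + q)) atTop (nhds r) :=
    hκ.comp hshift
  have hG : Tendsto (fun n : ℕ =>
      (∫ z, ‖P.eval z‖ ^ 2 * ‖(φ (n + j)).eval z‖ ^ 2 ∂mu) + r ^ 2
        - 2 * r * (κ (n + j) / κ (n + j + q))) atTop (nhds 0) := by
    have h1 : Tendsto (fun n : ℕ =>
        (∫ z, ‖P.eval z‖ ^ 2 * ‖(φ (n + j)).eval z‖ ^ 2 ∂mu) + r ^ 2)
        atTop (nhds (r ^ 2 + r ^ 2)) := hS.add tendsto_const_nhds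
    have h2 : Tendsto (fun n : ℕ => 2 * r * (κ (n + j) / κ (n + j + q)))
        atTop (nhds (2 * r * r)) := hT.const_mul (2 * r)
    have h3 := h1.sub h2
    have h0 : r ^ 2 + r ^ 2 - 2 * r * r = 0 := by ring
    rwa [h0] at h3
  have hF : ∀ n : ℕ,
      ‖(Polynomial.aeval M P - (r : ℂ) • R ^ q) ((R ^ n) (lp.single 2 j 1))‖
        = Real.sqrt ((∫ z, ‖P.eval z‖ ^ 2 * ‖(φ (n + j)).eval z‖ ^ 2 ∂mu) + r ^ 2
          - 2 * r * (κ (n + j) / κ (n + j + q))) := by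
    intro n
    rw [Rpow_single R hR, show j + n = n + j from Nat.add_comm j n, ← hnorm (n + j),
      Real.sqrt_sq (norm_nonneg _)]
  simp only [hF]
  have : Real.sqrt 0 = 0 := Real.sqrt_zero
  rw [← this]
  exact (Real.continuous_sqrt.continuousAt.tendsto).comp hG
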